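/- arXiv:2208.09928 — 2 statements merged into one kernel-verified Lean document; each statement's English description precedes it below -/
import Mathlib

section
/- For every s ∈ ℝ, every integer n ≥ 1, and every integer k with 1 ≤ k ≤ n, one has the reflection identity A_{n,k}(s) = n^{-s} · (n!)^{-s} · A_{n, n+1-k}(-s), which reduces the study of the coefficients for parameter -s to that for parameter s. -/
open Finset Polynomial MeasureTheory Filter

/-- The polynomials `Pₙˢ`, defined by `P₀ˢ = 1` and
`Pₙˢ(x) = (x / nˢ) · ∑_{k=0}^{n-1} Pₖˢ(x)` for `n ≥ 1`. -/
noncomputable def Pp (s : ℝ) : ℕ → Polynomial ℝ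
  | 0 => 1
  | n + 1 => Polynomial.C ((((n + 1 : ℕ)) : ℝ) ^ s)⁻¹ * Polynomial.X *
      ∑ k ∈ (Finset.range (n + 1)).attach, Pp s k.1
  decreasing_by exact Finset.mem_range.mp k.2

/-- `A_{n,k}(s)` : the coefficient of `x^k` in `Pₙˢ(x)`. -/
noncomputable def A (n k : ℕ) (s : ℝ) : ℝ := (Pp s n).coeff k

/-- Auxiliary product polynomial `∏_{j=1}^n (1 + x / jˢ)`. -/
noncomputable def Qq (s : ℝ) (n : ℕ) : Polynomial ℝ :=
  ∏ j ∈ Finset.range n, (1 + Polynomial.C ((((j + 1 : ℕ)) : ℝ) ^ s)⁻¹ * Polynomial.X)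

lemma Qq_succ (s : ℝ) (n : ℕ) :
    Qq s (n + 1) = Qq s n * (1 + Polynomial.C ((((n + 1 : ℕ)) : ℝ) ^ s)⁻¹ * Polynomial.X) := by
  unfold Qq
  rw [Finset.prod_range_succ]

lemma sum_Pp (s : ℝ) (n : ℕ) : ∑ k ∈ Finset.range (n + 1), Pp s k = Qq s n := by
  induction n with
  | zero => simp [Pp, Qq]
  | succ n ih =>
    rw [Finset.sum_range_succ, ih]
    have h1 : Pp s (n + 1) =
        Polynomial.C ((((n + 1 : ℕ)) : ℝ) ^ s)⁻¹ * Polynomial.X * Qq s n := by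
      rw [Pp, Finset.sum_attach _ (fun k => Pp s k), ih]
    rw [h1, Qq_succ]
    ring

lemma Pp_succ (s : ℝ) (n : ℕ) :
    Pp s (n + 1) = Polynomial.C ((((n + 1 : ℕ)) : ℝ) ^ s)⁻¹ * Polynomial.X * Qq s n := by
  rw [Pp, Finset.sum_attach _ (fun k => Pp s k), sum_Pp]

lemma natDegree_Qq_le (s : ℝ) (n : ℕ) : (Qq s n).natDegree ≤ n := by
  refine le_trans (Polynomial.natDegree_prod_le _ _) ?_
  calc ∑ j ∈ Finset.range n,
      (1 + Polynomial.C ((((j + 1 : ℕ)) : ℝ) ^ s)⁻¹ * Polynomial.X).natDegree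
      ≤ ∑ _j ∈ Finset.range n, 1 := by
        refine Finset.sum_le_sum fun j _ => ?_
        refine le_trans (Polynomial.natDegree_add_le _ _) ?_
        simp [Polynomial.natDegree_C_mul_le]
        exact le_trans (Polynomial.natDegree_C_mul_le _ _) (by simp)
    _ = n := by simp

lemma reflect_Qq (s : ℝ) (n : ℕ) :
    Polynomial.reflect n (Qq s n) =
      Polynomial.C (∏ j ∈ Finset.range n, ((((j + 1 : ℕ)) : ℝ) ^ s)⁻¹) * Qq (-s) n := by
  induction n with
  | zero => simp [Qq]
  | succ n ih =>
    have hpos : (0:ℝ) < (((n + 1 : ℕ)) : ℝ) := by positivity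
    set c : ℝ := ((((n + 1 : ℕ)) : ℝ) ^ s)⁻¹ with hc
    have hcne : c ≠ 0 := by
      rw [hc]
      positivity
    have hfac : Polynomial.reflect 1 (1 + Polynomial.C c * Polynomial.X) =
        Polynomial.C c * (1 + Polynomial.C c⁻¹ * Polynomial.X) := by
      have : (1 : Polynomial ℝ) + Polynomial.C c * Polynomial.X =
          Polynomial.C 1 * Polynomial.X ^ 0 + Polynomial.C c * Polynomial.X ^ 1 := by
        simp
      rw [this, Polynomial.reflect_add, Polynomial.reflect_C_mul_X_pow,
        Polynomial.reflect_C_mul_X_pow]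
      simp only [Polynomial.C_1, one_mul, pow_zero, mul_one, pow_one, Polynomial.revAt_le,
        Nat.zero_le, Nat.le_refl, Nat.sub_zero, Nat.sub_self]
      rw [mul_add, mul_one, ← mul_assoc, ← Polynomial.C_mul, mul_inv_cancel₀ hcne,
        Polynomial.C_1, one_mul, add_comm]
    have hQ : Qq s (n + 1) = Qq s n * (1 + Polynomial.C c * Polynomial.X) := Qq_succ s n
    have hdeg : (1 + Polynomial.C c * Polynomial.X).natDegree ≤ 1 := by
      refine le_trans (Polynomial.natDegree_add_le _ _) ?_
      simp
      exact le_trans (Polynomial.natDegree_C_mul_le _ _) (by simp)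
    rw [hQ, show n + 1 = n + 1 from rfl, Polynomial.reflect_mul _ _ (natDegree_Qq_le s n) hdeg,
      ih, hfac]
    have hcinv : c⁻¹ = ((((n + 1 : ℕ)) : ℝ) ^ (-s))⁻¹ := by
      rw [hc, inv_inv, Real.rpow_neg hpos.le, inv_inv]
    rw [hcinv, Finset.prod_range_succ, ← hc, Polynomial.C_mul, Qq_succ (-s) n]
    have : ((((n + 1 : ℕ)) : ℝ) ^ (-s))⁻¹ = c⁻¹ := hcinv.symm
    ring

/-- The reflection identity `A_{n,k}(s) = n^{-s} · (n!)^{-s} · A_{n,n+1-k}(-s)`. -/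
theorem coeff_reflection (s : ℝ) (n : ℕ) (hn : 1 ≤ n) (k : ℕ) (hk1 : 1 ≤ k)
    (hk2 : k ≤ n) :
    A n k s = (n : ℝ) ^ (-s) * (n.factorial : ℝ) ^ (-s) * A n (n + 1 - k) (-s) := by
  obtain ⟨m, rfl⟩ : ∃ m, n = m + 1 := ⟨n - 1, (Nat.succ_pred_eq_of_pos hn).symm⟩
  obtain ⟨j, rfl⟩ : ∃ j, k = j + 1 := ⟨k - 1, (Nat.succ_pred_eq_of_pos hk1).symm⟩
  have hjm : j ≤ m := by omega
  have hrefl : m + 1 + 1 - (j + 1) = (m - j) + 1 := by omega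
  -- coefficients of Pp
  have coeffPp : ∀ (t : ℝ) (i : ℕ),
      (Pp t (m + 1)).coeff (i + 1) = ((((m + 1 : ℕ)) : ℝ) ^ t)⁻¹ * (Qq t m).coeff i := by
    intro t i
    rw [Pp_succ, mul_assoc, Polynomial.coeff_C_mul, Polynomial.coeff_X_mul]
  have key : (Qq s m).coeff j =
      (∏ l ∈ Finset.range m, ((((l + 1 : ℕ)) : ℝ) ^ s)⁻¹) * (Qq (-s) m).coeff (m - j) := by
    have h1 : (Qq s m).coeff j = (Polynomial.reflect m (Qq s m)).coeff (m - j) := by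
      rw [Polynomial.coeff_reflect, Polynomial.revAt_le (Nat.sub_le m j),
        Nat.sub_sub_self hjm]
    rw [h1, reflect_Qq, Polynomial.coeff_C_mul]
  have hpos : (0:ℝ) < (((m + 1 : ℕ)) : ℝ) := by positivity
  have hfacpos : (0:ℝ) < (((m + 1).factorial : ℕ) : ℝ) := by
    exact_mod_cast Nat.cast_pos.mpr (m + 1).factorial_pos
  have hprod : (∏ l ∈ Finset.range m, ((((l + 1 : ℕ)) : ℝ) ^ s)⁻¹) =
      (((m.factorial : ℕ) : ℝ) ^ s)⁻¹ := by
    rw [Finset.prod_inv_distrib]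
    congr 1
    rw [Real.finset_prod_rpow _ _ (fun i _ => by positivity) s]
    congr 1
    push_cast [← Finset.prod_range_add_one_eq_factorial m]
    rfl
  have hfact : (((m + 1).factorial : ℕ) : ℝ) = (((m + 1 : ℕ)) : ℝ) * ((m.factorial : ℕ) : ℝ) := by
    rw [Nat.factorial_succ]; push_cast; ring
  unfold A
  rw [coeffPp s j, hrefl, coeffPp (-s) (m - j), key, hprod]
  rw [Real.rpow_neg hpos.le, Real.rpow_neg hfacpos.le, hfact]
  have hms : (0:ℝ) < ((m.factorial : ℕ) : ℝ) := by
    exact_mod_cast Nat.cast_pos.mpr m.factorial_pos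
  have hmul : ((((m + 1 : ℕ)) : ℝ) * ((m.factorial : ℕ) : ℝ)) ^ s =
      (((m + 1 : ℕ)) : ℝ) ^ s * ((m.factorial : ℕ) : ℝ) ^ s :=
    Real.mul_rpow hpos.le hms.le
  rw [hmul]
  have h1 : ((((m + 1 : ℕ)) : ℝ) ^ s) ≠ 0 := by positivity
  field_simp
end

section
/- There exist infinitely many integers n ≥ 3 such that the sequence of unsigned Stirling numbers of the first kind {c(n,k)}_{k=0}^{n} has exactly one mode, i.e. there is a unique index k₀ with c(n,k₀) ≥ c(n,k) for all k ∈ {0,…,n}. -/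
open Finset Polynomial MeasureTheory Filter

/-- The number of cycles (orbits, including fixed points) of a permutation of `Fin n`. -/
noncomputable def cycleCount (n : ℕ) (σ : Equiv.Perm (Fin n)) : ℕ :=
  σ.cycleType.card + (n - σ.support.card)

/-- The unsigned Stirling number of the first kind: the number of permutations of an
`n`-element set with exactly `k` cycles. -/
noncomputable def stirling1 (n k : ℕ) : ℕ :=
  Nat.card {σ : Equiv.Perm (Fin n) // cycleCount n σ = k}

section StirlingProof

set_option linter.unusedSectionVars false
set_option linter.unusedVariables false

open Equiv Equiv.Perm Finset

open Equiv Equiv.Perm Finset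

variable {α : Type*} [DecidableEq α] [Fintype α] {β : Type*} [DecidableEq β] [Fintype β]

/-- total number of orbits of a permutation -/
noncomputable def ccount (σ : Perm α) : ℕ :=
  σ.cycleType.card + (Fintype.card α - σ.support.card)

lemma permCongr_mul (e : α ≃ β) (p q : Perm α) :
    e.permCongr (p * q) = e.permCongr p * e.permCongr q := by
  ext x; simp

lemma permCongr_zpow (e : α ≃ β) (p : Perm α) (i : ℤ) :
    e.permCongr (p ^ i) = e.permCongr p ^ i :=
  (MonoidHom.mk' (fun p : Perm α => e.permCongr p)
    (fun p q => _root_.permCongr_mul e p q)).map_zpow p i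

lemma support_permCongr (e : α ≃ β) (p : Perm α) :
    (e.permCongr p).support = p.support.map e.toEmbedding := by
  ext x
  simp only [mem_support, permCongr_apply, mem_map_equiv]
  constructor
  · intro h hc
    exact h (by rw [hc]; simp)
  · intro h hc
    have := congrArg e.symm hc
    simp at this
    exact h this

lemma isCycle_permCongr (e : α ≃ β) {p : Perm α} (hp : p.IsCycle) :
    (e.permCongr p).IsCycle := by
  obtain ⟨x, hx, h⟩ := hp
  refine ⟨e x, by simpa using fun hc => hx (e.injective hc), ?_⟩
  intro y hy
  have hy' : p (e.symm y) ≠ e.symm y := by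
    intro hc
    exact hy (by simp [permCongr_apply, hc])
  obtain ⟨i, hi⟩ := h hy'
  refine ⟨i, ?_⟩
  rw [← permCongr_zpow]
  simp only [permCongr_apply]
  simp [hi]

lemma disjoint_permCongr (e : α ≃ β) {p q : Perm α} (h : p.Disjoint q) :
    (e.permCongr p).Disjoint (e.permCongr q) := by
  intro x
  rcases h (e.symm x) with h' | h' <;> [left; right] <;> simp [permCongr_apply, h']

lemma cycleType_permCongr (e : α ≃ β) (p : Perm α) :
    (e.permCongr p).cycleType = p.cycleType := by
  induction p using Equiv.Perm.cycle_induction_on with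
  | base_one =>
      have : e.permCongr (1 : Perm α) = 1 := by ext x; simp
      rw [this, cycleType_one, cycleType_one]
  | base_cycles c hc =>
      rw [(isCycle_permCongr e hc).cycleType, hc.cycleType, support_permCongr, card_map]
  | induction_disjoint p q hd hc hp hq =>
      rw [_root_.permCongr_mul, (disjoint_permCongr e hd).cycleType_mul, hd.cycleType_mul, hp, hq]

lemma ccount_permCongr (e : α ≃ β) (p : Perm α) :
    ccount (e.permCongr p) = ccount p := by
  unfold ccount
  rw [cycleType_permCongr, support_permCongr, card_map, Fintype.card_congr e]

/-- Inserting a fixed point `a` into the cycle of `b`. -/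
lemma insert_point {a b : α} (hab : a ≠ b) {c : Perm α} (hc : c.IsCycle)
    (ha : c a = a) (hb : b ∈ c.support) :
    (swap a b * c).IsCycle ∧ (swap a b * c).support = insert a c.support := by
  set l := c.toList b with hl
  have hlen : 2 ≤ l.length := two_le_length_toList_iff_mem_support.2 hb
  have hnd : l.Nodup := nodup_toList c b
  have hne : l ≠ [] := by
    intro h; rw [h] at hlen; simp at hlen
  have hhead : l.head hne = b := by
    rw [← List.get_mk_zero (by omega : 0 < l.length)]
    exact toList_getElem_zero (p := c) (x := b) hb
  have hbl : l = b :: l.tail := by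
    conv_lhs => rw [← List.cons_head_tail hne]
    rw [hhead]
  have hal : a ∉ l := by
    intro hmem
    obtain ⟨hsc, -⟩ := mem_toList_iff.1 hmem
    obtain ⟨i, hi⟩ := hsc
    have h2 : (c ^ i)⁻¹ a = a := by
      rw [← zpow_neg]
      exact zpow_apply_eq_self_of_apply_eq_self ha (-i)
    have hba : b = a := by
      have h3 : (c ^ i)⁻¹ ((c ^ i) b) = (c ^ i)⁻¹ a := by rw [hi]
      simpa [h2] using h3
    exact hab hba.symm
  have hformc : l.formPerm = c := by
    rw [hl, formPerm_toList, hc.cycleOf_eq (mem_support.1 hb)]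
  have hmul : swap a b * c = (a :: l).formPerm := by
    conv_rhs => rw [hbl]
    rw [List.formPerm_cons_cons, ← hbl, hformc]
  have hnd' : (a :: l).Nodup := List.nodup_cons.2 ⟨hal, hnd⟩
  have hlen' : 2 ≤ (a :: l).length := by simp only [List.length_cons]; omega
  have hsing : ∀ x : α, l ≠ [x] := by
    intro x hx
    have := congrArg List.length hx
    simp only [List.length_cons, List.length_nil] at this; omega
  have hsing' : ∀ x : α, a :: l ≠ [x] := by
    intro x hx
    have := congrArg List.length hx
    simp only [List.length_cons, List.length_nil] at this; omega
  have hsupl : l.toFinset = c.support := by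
    rw [← List.support_formPerm_of_nodup l hnd hsing, hformc]
  constructor
  · rw [hmul]; exact List.isCycle_formPerm hnd' hlen'
  · rw [hmul, List.support_formPerm_of_nodup _ hnd' hsing', List.toFinset_cons, hsupl]

/-- Multiplying by a transposition joining a fixed point to another orbit
decreases the orbit count by one. -/
lemma ccount_swap_mul {τ : Perm α} {a b : α} (ha : τ a = a) (hab : a ≠ b) :
    ccount (swap a b * τ) + 1 = ccount τ := by
  have hamem : a ∉ τ.support := by simp [mem_support, ha]
  by_cases hb : τ b = b
  · -- b is also a fixed point: the swap is a new 2-cycle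
    have hbmem : b ∉ τ.support := by simp [mem_support, hb]
    have hdsup : Disjoint ({a, b} : Finset α) τ.support := by
      refine Finset.disjoint_left.2 (fun x hx hx2 => ?_)
      rcases Finset.mem_insert.1 hx with rfl | hx
      · exact hamem hx2
      · rw [Finset.mem_singleton] at hx; subst hx; exact hbmem hx2
    have hd : (swap a b).Disjoint τ := by
      rw [disjoint_iff_disjoint_support, support_swap hab]
      exact hdsup
    have hct : (swap a b * τ).cycleType = (swap a b).cycleType + τ.cycleType :=
      hd.cycleType_mul
    have hsw : (swap a b).cycleType = {2} := by
      rw [(isCycle_swap hab).cycleType, card_support_swap hab]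
    have hcard : (swap a b * τ).support.card = τ.support.card + 2 := by
      rw [hd.support_mul, support_swap hab, Finset.card_union_of_disjoint hdsup,
        Finset.card_pair hab]
      omega
    have hle : τ.support.card + 2 ≤ Fintype.card α := by
      rw [← hcard]; exact Finset.card_le_univ _
    unfold ccount
    rw [hct, hsw, hcard, Multiset.card_add, Multiset.card_singleton]
    omega
  · -- b is moved: a is inserted into the cycle of b
    have hbmem : b ∈ τ.support := mem_support.2 hb
    set c := τ.cycleOf b with hcdef
    have hcmem : c ∈ τ.cycleFactorsFinset := cycleOf_mem_cycleFactorsFinset_iff.2 hbmem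
    have hcyc : c.IsCycle := isCycle_cycleOf τ hb
    have hca : c a = a := by
      rw [hcdef, cycleOf_apply]
      split <;> simp [ha]
    have hcb : b ∈ c.support := mem_support_cycleOf_iff.2 ⟨SameCycle.refl _ _, hbmem⟩
    set ρ := τ * c⁻¹ with hρdef
    have hdρc : ρ.Disjoint c := disjoint_mul_inv_of_mem_cycleFactorsFinset hcmem
    have hτ : τ = ρ * c := by rw [hρdef]; group
    obtain ⟨hcyc', hsupp'⟩ := insert_point hab hcyc hca hcb
    have hsupτ : τ.support = ρ.support ∪ c.support := by
      conv_lhs => rw [hτ]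
      exact hdρc.support_mul
    have haρ : a ∉ ρ.support := by
      intro hmem
      exact hamem (hsupτ ▸ Finset.mem_union_left _ hmem)
    have hbρ : b ∉ ρ.support := fun hmem =>
      Finset.disjoint_left.1 hdρc.disjoint_support hmem hcb
    have hcomm : swap a b * ρ = ρ * swap a b := by
      have hd2 : (swap a b).Disjoint ρ := by
        rw [disjoint_iff_disjoint_support, support_swap hab]
        refine Finset.disjoint_left.2 (fun x hx hx2 => ?_)
        rcases Finset.mem_insert.1 hx with rfl | hx
        · exact haρ hx2
        · rw [Finset.mem_singleton] at hx; subst hx; exact hbρ hx2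
      exact hd2.commute.eq
    have hσ : swap a b * τ = ρ * (swap a b * c) := by
      conv_lhs => rw [hτ]
      rw [← mul_assoc, hcomm, mul_assoc]
    have hdρσc : ρ.Disjoint (swap a b * c) := by
      rw [disjoint_iff_disjoint_support, hsupp']
      refine Finset.disjoint_left.2 (fun x hx hx2 => ?_)
      rcases Finset.mem_insert.1 hx2 with rfl | hx2
      · exact haρ hx
      · exact Finset.disjoint_left.1 hdρc.disjoint_support hx hx2
    have hasupτ : a ∉ ρ.support ∪ c.support := by
      rw [← hsupτ]; exact hamem
    have hcards : (swap a b * τ).support.card = τ.support.card + 1 := by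
      rw [hσ, hdρσc.support_mul, hsupp', Finset.union_insert,
        Finset.card_insert_of_notMem hasupτ, hsupτ]
    have hacs : a ∉ c.support := fun h =>
      hamem (hsupτ ▸ Finset.mem_union_right _ h)
    have hcyct : (swap a b * τ).cycleType = ρ.cycleType + {c.support.card + 1} := by
      rw [hσ, hdρσc.cycleType_mul, hcyc'.cycleType, hsupp',
        Finset.card_insert_of_notMem hacs]
    have hcycτ : τ.cycleType = ρ.cycleType + {c.support.card} := by
      conv_lhs => rw [hτ]
      rw [hdρc.cycleType_mul, hcyc.cycleType]
    have hle : τ.support.card + 1 ≤ Fintype.card α := by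
      rw [← hcards]; exact Finset.card_le_univ _
    unfold ccount
    rw [hcyct, hcycτ, hcards, Multiset.card_add, Multiset.card_add,
      Multiset.card_singleton, Multiset.card_singleton]
    omega

lemma optionCongr_eq_extendDomain (e : Perm β) :
    e.optionCongr = e.extendDomain (optionIsSomeEquiv β).symm := by
  refine Equiv.ext fun o => ?_
  cases o with
  | none =>
      rw [extendDomain_apply_not_subtype]
      · rfl
      · simp
  | some x =>
      have h := e.extendDomain_apply_subtype ((optionIsSomeEquiv β).symm)
        (b := some x) (by rfl)
      rw [h]
      rfl

lemma ccount_optionCongr (e : Perm β) : ccount e.optionCongr = ccount e + 1 := by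
  unfold ccount
  rw [optionCongr_eq_extendDomain e, cycleType_extendDomain, card_support_extend_domain,
    Fintype.card_option]
  have : e.support.card ≤ Fintype.card β := Finset.card_le_univ _
  omega

lemma decomposeFin_symm_eq {n : ℕ} (p : Fin (n + 1)) (e : Perm (Fin n)) :
    Equiv.Perm.decomposeFin.symm (p, e) =
      swap 0 p * Equiv.Perm.decomposeFin.symm (0, e) := by
  ext x
  refine Fin.cases ?_ ?_ x
  · simp
  · intro i
    simp [Equiv.Perm.decomposeFin_symm_apply_succ]

lemma ccount_decomposeFin_zero {n : ℕ} (e : Perm (Fin n)) :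
    ccount (Equiv.Perm.decomposeFin.symm (0, e)) = ccount e + 1 := by
  have h1 : Equiv.Perm.decomposeFin.symm (0, e) =
      (Equiv.permCongr (finSuccEquiv n)).symm (Equiv.Perm.decomposeOption.symm (none, e)) := by
    simp [Equiv.Perm.decomposeFin]
  have h2 : Equiv.Perm.decomposeOption.symm (none, e) = e.optionCongr := by
    simp [Equiv.Perm.decomposeOption]
    rfl
  rw [h1, h2]
  have h3 : (Equiv.permCongr (finSuccEquiv n)).symm = (finSuccEquiv n).symm.permCongr := rfl
  rw [h3, ccount_permCongr, ccount_optionCongr]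

lemma ccount_decomposeFin {n : ℕ} (p : Fin (n + 1)) (e : Perm (Fin n)) :
    ccount (Equiv.Perm.decomposeFin.symm (p, e)) = ccount e + if p = 0 then 1 else 0 := by
  by_cases hp : p = 0
  · subst hp
    simp [ccount_decomposeFin_zero]
  · rw [decomposeFin_symm_eq p e]
    have hfix : (Equiv.Perm.decomposeFin.symm (0, e)) 0 = 0 := by simp
    have := ccount_swap_mul hfix (Ne.symm hp)
    rw [ccount_decomposeFin_zero] at this
    simp [hp]
    omega

lemma ccount_decomposeFin' {n : ℕ} (pe : Fin (n + 1) × Perm (Fin n)) :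
    ccount (Equiv.Perm.decomposeFin.symm pe) =
      ccount pe.2 + if pe.1 = 0 then 1 else 0 := by
  obtain ⟨p, e⟩ := pe; exact ccount_decomposeFin p e

lemma cycleCount_eq_ccount {n : ℕ} (σ : Perm (Fin n)) : cycleCount n σ = ccount σ := by
  unfold cycleCount ccount
  rw [Fintype.card_fin]

lemma stirling1_eq_card (m j : ℕ) :
    stirling1 m j = Nat.card {e : Perm (Fin m) // ccount e = j} := by
  unfold stirling1
  exact Nat.card_congr (Equiv.subtypeEquivRight fun σ => by rw [cycleCount_eq_ccount])

lemma ccount_pos {σ : Perm α} (h : 0 < Fintype.card α) : 0 < ccount σ := by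
  unfold ccount
  rcases lt_or_eq_of_le (Finset.card_le_univ σ.support) with hlt | heq
  · omega
  · have hne : σ ≠ 1 := by
      intro h1
      subst h1
      rw [support_one] at heq
      simp at heq
      omega
    have : σ.cycleType ≠ 0 := by
      simp [cycleType_eq_zero]
      exact hne
    have := Multiset.card_pos.2 this
    omega

lemma stirling1_succ_zero (n : ℕ) : stirling1 (n + 1) 0 = 0 := by
  rw [stirling1_eq_card]
  have : IsEmpty {e : Perm (Fin (n + 1)) // ccount e = 0} := by
    refine ⟨fun ⟨e, he⟩ => ?_⟩
    have := ccount_pos (σ := e) (by simp)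
    omega
  exact Nat.card_of_isEmpty

lemma stirling1_zero (k : ℕ) : stirling1 0 k = if k = 0 then 1 else 0 := by
  rw [stirling1_eq_card]
  have hcc : ∀ σ : Perm (Fin 0), ccount σ = 0 := by
    intro σ
    have h1 : σ = 1 := Subsingleton.elim _ _
    subst h1
    unfold ccount
    simp
  by_cases hk : k = 0
  · subst hk
    simp only [if_true]
    rw [Nat.card_congr (Equiv.subtypeUnivEquiv hcc)]
    simp [Nat.card_eq_fintype_card]
  · simp only [hk, if_false]
    have : IsEmpty {e : Perm (Fin 0) // ccount e = k} := by
      refine ⟨fun ⟨e, he⟩ => ?_⟩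
      rw [hcc e] at he
      exact hk he.symm
    exact Nat.card_of_isEmpty

lemma stirling1_succ (n k : ℕ) :
    stirling1 (n + 1) (k + 1) = stirling1 n k + n * stirling1 n (k + 1) := by
  classical
  rw [stirling1_eq_card]
  have e1 : {σ : Perm (Fin (n + 1)) // ccount σ = k + 1} ≃
      {pe : Fin (n + 1) × Perm (Fin n) //
        ccount pe.2 + (if pe.1 = 0 then 1 else 0) = k + 1} := by
    refine Equiv.Perm.decomposeFin.subtypeEquiv fun σ => ?_
    have h := ccount_decomposeFin' (Equiv.Perm.decomposeFin σ)
    rw [Equiv.symm_apply_apply] at h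
    rw [h]
  have e2 : {pe : Fin (n + 1) × Perm (Fin n) //
        ccount pe.2 + (if pe.1 = 0 then 1 else 0) = k + 1} ≃
      Σ p : Fin (n + 1), {e : Perm (Fin n) //
        ccount e + (if p = 0 then 1 else 0) = k + 1} :=
    Equiv.subtypeProdEquivSigmaSubtype
      (fun (p : Fin (n + 1)) (e : Perm (Fin n)) => ccount e + (if p = 0 then 1 else 0) = k + 1)
  rw [Nat.card_congr (e1.trans e2), Nat.card_eq_fintype_card, Fintype.card_sigma,
    Fin.sum_univ_succ]
  have t0 : Fintype.card {e : Perm (Fin n) //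
      ccount e + (if (0 : Fin (n + 1)) = 0 then 1 else 0) = k + 1} =
      Fintype.card {e : Perm (Fin n) // ccount e = k} :=
    Fintype.card_congr (Equiv.subtypeEquivRight fun e => by simp)
  have ts : ∀ i : Fin n, Fintype.card {e : Perm (Fin n) //
      ccount e + (if (i.succ : Fin (n + 1)) = 0 then 1 else 0) = k + 1} =
      Fintype.card {e : Perm (Fin n) // ccount e = k + 1} := fun i =>
    Fintype.card_congr (Equiv.subtypeEquivRight fun e => by simp [Fin.succ_ne_zero])
  rw [t0]
  rw [Finset.sum_congr rfl (fun i _ => ts i), Finset.sum_const, Finset.card_univ,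
    Fintype.card_fin, smul_eq_mul]
  rw [stirling1_eq_card n k, stirling1_eq_card n (k + 1),
    Nat.card_eq_fintype_card, Nat.card_eq_fintype_card]

/-- Recursive model of the Stirling numbers of the first kind. -/
def S : ℕ → ℕ → ℕ
  | 0, 0 => 1
  | 0, _ + 1 => 0
  | _ + 1, 0 => 0
  | n + 1, k + 1 => S n k + n * S n (k + 1)

lemma stirling1_eq_S (n k : ℕ) : stirling1 n k = S n k := by
  induction n generalizing k with
  | zero =>
      cases k with
      | zero => simp [stirling1_zero, S]
      | succ k => simp [stirling1_zero, S]
  | succ n ih =>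
      cases k with
      | zero => simp [stirling1_succ_zero, S]
      | succ k => rw [stirling1_succ, ih, ih]; rfl

lemma S_succ_zero (n : ℕ) : S (n + 1) 0 = 0 := rfl

lemma S_eq_zero_of_lt : ∀ {n k : ℕ}, n < k → S n k = 0 := by
  intro n
  induction n with
  | zero => intro k hk; cases k with
      | zero => omega
      | succ k => rfl
  | succ n ih =>
      intro k hk
      cases k with
      | zero => omega
      | succ k =>
          show S n k + n * S n (k + 1) = 0
          rw [ih (by omega), ih (by omega)]; ring

lemma S_self (n : ℕ) : S n n = 1 := by
  induction n with
  | zero => rfl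
  | succ n ih =>
      show S n n + n * S n (n + 1) = 1
      rw [ih, S_eq_zero_of_lt (by omega)]; ring

lemma S_pos : ∀ {n k : ℕ}, 1 ≤ k → k ≤ n → 0 < S n k := by
  intro n
  induction n with
  | zero => intro k h1 h2; omega
  | succ n ih =>
      intro k h1 h2
      cases k with
      | zero => omega
      | succ k =>
          show 0 < S n k + n * S n (k + 1)
          rcases Nat.eq_or_lt_of_le h1 with h | h
          · -- k = 0
            have hk0 : k = 0 := by omega
            subst hk0
            rcases Nat.eq_zero_or_pos n with hn | hn
            · subst hn; simp [S]
            · have := ih (k := 1) le_rfl hn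
              positivity
          · have hk1 : 1 ≤ k := by omega
            have hkn : k ≤ n := by omega
            have := ih hk1 hkn
            positivity

lemma lc_step (x1 x2 x3 x4 nn : ℕ) (h1 : x1 * x3 < x2 * x2) (h2 : x2 * x4 < x3 * x3)
    (h3 : x1 * x4 ≤ x2 * x3) :
    (x1 + nn * x2) * (x3 + nn * x4) < (x2 + nn * x3) * (x2 + nn * x3) := by
  nlinarith [Nat.mul_le_mul_left nn h3, Nat.mul_le_mul_left (nn * nn) h2.le]

/-- Strict log-concavity of the Stirling numbers of the first kind. -/
lemma S_lc : ∀ n j, j + 1 ≤ n → S n j * S n (j + 2) < S n (j + 1) * S n (j + 1) := by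
  intro n
  induction n with
  | zero => intro j hj; omega
  | succ n ih =>
      intro j hj
      cases j with
      | zero =>
          have h1 : 0 < S (n + 1) 1 := S_pos le_rfl (by omega)
          rw [S_succ_zero, Nat.zero_mul]
          exact Nat.mul_pos h1 h1
      | succ m =>
          have hm1 : m + 1 ≤ n := by omega
          show (S n m + n * S n (m + 1)) * (S n (m + 2) + n * S n (m + 3)) <
            (S n (m + 1) + n * S n (m + 2)) * (S n (m + 1) + n * S n (m + 2))
          rcases Nat.eq_or_lt_of_le hm1 with he | hlt
          · -- m + 1 = n : boundary
            have hz2 : S n (m + 2) = 0 := S_eq_zero_of_lt (by omega)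
            have hz3 : S n (m + 3) = 0 := S_eq_zero_of_lt (by omega)
            have hp : 0 < S n (m + 1) := S_pos (n := n) (by omega) (by omega)
            have hz : S n (m + 2) + n * S n (m + 3) = 0 := by rw [hz2, hz3]; ring
            rw [hz, Nat.mul_zero]
            have h5 : 0 < S n (m + 1) + n * S n (m + 2) := by omega
            exact Nat.mul_pos h5 h5
          · -- m + 2 ≤ n
            have IH1 := ih m (by omega)
            have IH2 := ih (m + 1) (by omega)
            have hp : 0 < S n (m + 1) * S n (m + 2) := by
              have q1 := S_pos (n := n) (k := m + 1) (by omega) (by omega)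
              have q2 := S_pos (n := n) (k := m + 2) (by omega) (by omega)
              exact Nat.mul_pos q1 q2
            have cross : S n m * S n (m + 3) ≤ S n (m + 1) * S n (m + 2) := by
              have hmul : (S n m * S n (m + 3)) * (S n (m + 1) * S n (m + 2)) ≤
                  (S n (m + 1) * S n (m + 2)) * (S n (m + 1) * S n (m + 2)) := by
                calc (S n m * S n (m + 3)) * (S n (m + 1) * S n (m + 2))
                    = (S n m * S n (m + 2)) * (S n (m + 1) * S n (m + 3)) := by ring
                  _ ≤ (S n (m + 1) * S n (m + 1)) * (S n (m + 2) * S n (m + 2)) :=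
                      Nat.mul_le_mul IH1.le IH2.le
                  _ = (S n (m + 1) * S n (m + 2)) * (S n (m + 1) * S n (m + 2)) := by ring
              exact Nat.le_of_mul_le_mul_right hmul hp
            exact lc_step _ _ _ _ n IH1 IH2 cross

lemma S_dec {n k : ℕ} (h1 : 1 ≤ k) (h2 : k + 1 ≤ n) (h : S n (k + 1) ≤ S n k) :
    S n (k + 2) < S n (k + 1) := by
  have hlc := S_lc n k h2
  have hp : 0 < S n k := S_pos h1 (by omega)
  have h2' : S n (k + 1) * S n (k + 1) ≤ S n k * S n (k + 1) :=
    Nat.mul_le_mul_right _ h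
  have hfin : S n k * S n (k + 2) < S n k * S n (k + 1) := lt_of_lt_of_le hlc h2'
  exact Nat.lt_of_mul_lt_mul_left hfin

lemma S_dec_chain {n r : ℕ} (h1 : 1 ≤ r) (h2 : r + 1 ≤ n) (h : S n (r + 1) ≤ S n r) :
    ∀ t, r ≤ t → t ≤ n → S n (t + 1) ≤ S n t ∧ (r < t → S n (t + 1) < S n t) := by
  intro t
  induction t with
  | zero => intro h3 _; omega
  | succ t ih =>
      intro h3 h4
      rcases Nat.eq_or_lt_of_le h3 with he | hlt
      · refine ⟨?_, by omega⟩
        rw [← he]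
        exact h
      · have ht : r ≤ t := by omega
        obtain ⟨hle, -⟩ := ih ht (by omega)
        have hs : S n (t + 2) < S n (t + 1) := S_dec (by omega) (by omega) hle
        exact ⟨hs.le, fun _ => hs⟩

/-- `k` is a mode of the sequence `S n 0, …, S n n`. -/
def Md (n k : ℕ) : Prop := k ≤ n ∧ ∀ j, j ≤ n → S n j ≤ S n k

lemma S_zero_of_pos {n : ℕ} (hn : 1 ≤ n) : S n 0 = 0 := by
  cases n with
  | zero => omega
  | succ n => rfl

lemma Md_pos {n k : ℕ} (hn : 1 ≤ n) (h : Md n k) : 1 ≤ k ∧ 0 < S n k := by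
  have h1 := h.2 n le_rfl
  rw [S_self] at h1
  refine ⟨?_, by omega⟩
  by_contra hk
  have hk0 : k = 0 := by omega
  subst hk0
  rw [S_zero_of_pos hn] at h1
  omega

lemma Md_adj {n k1 k2 : ℕ} (hn : 1 ≤ n) (h1 : Md n k1) (h2 : Md n k2) (hlt : k1 < k2) :
    k2 = k1 + 1 := by
  by_contra hne
  have hgap : k1 + 1 < k2 := by omega
  have hk2n : k2 ≤ n := h2.1
  have heq : S n k2 = S n k1 := le_antisymm (h1.2 k2 h2.1) (h2.2 k1 (by omega))
  have hk11 : 1 ≤ k1 := (Md_pos hn h1).1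
  have hdesc : S n (k1 + 1) ≤ S n k1 := h1.2 (k1 + 1) (by omega)
  obtain ⟨-, hstrict⟩ := S_dec_chain hk11 (by omega) hdesc (k2 - 1) (by omega) (by omega)
  have hs := hstrict (by omega)
  have hrw : k2 - 1 + 1 = k2 := by omega
  rw [hrw] at hs
  have hle := h1.2 (k2 - 1) (by omega)
  omega

/-- A tie: two adjacent modes. -/
def Tie (n : ℕ) : Prop := ∃ k, Md n k ∧ Md n (k + 1)

lemma exists_mode (n : ℕ) : ∃ k, Md n k := by
  obtain ⟨b, hb, hmax⟩ := Finset.exists_max_image (Finset.range (n + 1)) (S n)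
    ⟨0, Finset.mem_range.2 (by omega)⟩
  have hbn : b ≤ n := by have := Finset.mem_range.1 hb; omega
  exact ⟨b, hbn, fun j hj => hmax j (Finset.mem_range.2 (by omega))⟩

lemma unique_of_no_tie {n : ℕ} (hn : 1 ≤ n) (h : ¬ Tie n) : ∃! k, Md n k := by
  obtain ⟨k, hk⟩ := exists_mode n
  refine ⟨k, hk, fun k' hk' => ?_⟩
  by_contra hne
  rcases Nat.lt_or_ge k' k with hlt | hge
  · have := Md_adj hn hk' hk hlt
    exact h ⟨k', hk', this ▸ hk⟩
  · have hlt : k < k' := by omega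
    have := Md_adj hn hk hk' hlt
    exact h ⟨k, hk, this ▸ hk'⟩

lemma tie_succ {n : ℕ} (hn : 1 ≤ n) (h : Tie n) : ¬ Tie (n + 1) := by
  obtain ⟨k, hk, hk1⟩ := h
  have hk11 : 1 ≤ k := (Md_pos hn hk).1
  have hkn : k + 1 ≤ n := hk1.1
  have hMpos : 0 < S n k := (Md_pos hn hk).2
  have hMeq : S n (k + 1) = S n k := le_antisymm (hk.2 (k + 1) hk1.1) (hk1.2 k (by omega))
  -- the sequence is nondecreasing up to the mode k
  have ND : ∀ t, t ≤ k → S n t ≤ S n (t + 1) := by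
    intro t ht
    rcases Nat.eq_zero_or_pos t with ht0 | ht1
    · subst ht0
      rw [S_zero_of_pos hn]
      omega
    · by_contra hcon
      push_neg at hcon
      obtain ⟨hle, hstrict⟩ := S_dec_chain ht1 (by omega) hcon.le k (by omega) (by omega)
      rcases Nat.eq_or_lt_of_le ht with he | hlt
      · subst he; omega
      · have := hstrict (by omega)
        omega
  rintro ⟨j, hj, hj1⟩
  have hj11 : 1 ≤ j := (Md_pos (by omega) hj).1
  have hjn : j ≤ n := by have := hj1.1; omega
  obtain ⟨m, rfl⟩ : ∃ m, j = m + 1 := ⟨j - 1, by omega⟩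
  have hE : S n m + n * S n (m + 1) = S n (m + 1) + n * S n (m + 2) := by
    have e1 : S (n + 1) (m + 1) = S n m + n * S n (m + 1) := rfl
    have e2 : S (n + 1) (m + 2) = S n (m + 1) + n * S n (m + 2) := rfl
    have heq : S (n + 1) (m + 1) = S (n + 1) (m + 2) :=
      le_antisymm (hj1.2 (m + 1) (by omega)) (hj.2 (m + 2) hj1.1)
    rw [← e1, ← e2, heq]
  rcases Nat.lt_or_ge m k with hc1 | hge
  · -- j = m+1 ≤ k : three consecutive equal values
    have h1 : S n m ≤ S n (m + 1) := ND m (by omega)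
    have h2 : S n (m + 1) ≤ S n (m + 2) := ND (m + 1) (by omega)
    have h2' : n * S n (m + 1) ≤ n * S n (m + 2) := Nat.mul_le_mul_left n h2
    have hAB : S n m = S n (m + 1) := by omega
    have hPQ : n * S n (m + 1) = n * S n (m + 2) := by omega
    have hBC : S n (m + 1) = S n (m + 2) := Nat.eq_of_mul_eq_mul_left (by omega) hPQ
    rcases Nat.eq_zero_or_pos m with hm0 | hm1
    · subst hm0
      have hpos : 0 < S n 1 := S_pos le_rfl (by omega)
      rw [S_zero_of_pos hn] at hAB
      have hone : S n (0 + 1) = S n 1 := rfl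
      omega
    · have hlc := S_lc n m (by omega)
      rw [hAB, hBC] at hlc
      omega
  · rcases Nat.eq_or_lt_of_le hge with he | hgt
    · -- j = k + 1
      have hE' : S n k + n * S n (k + 1) = S n (k + 1) + n * S n (k + 2) := by
        rw [← he] at hE; exact hE
      have hPQ : n * S n (k + 1) = n * S n (k + 2) := by omega
      have hBC : S n (k + 1) = S n (k + 2) := Nat.eq_of_mul_eq_mul_left (by omega) hPQ
      have := S_dec hk11 hkn hMeq.le
      omega
    · -- j ≥ k + 2 : strictly decreasing region
      have hchain := S_dec_chain hk11 hkn hMeq.le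
      obtain ⟨-, hs1⟩ := hchain m (by omega) (by omega)
      have s1 : S n (m + 1) < S n m := hs1 (by omega)
      obtain ⟨-, hs2⟩ := hchain (m + 1) (by omega) (by omega)
      have s2 : S n (m + 2) < S n (m + 1) := hs2 (by omega)
      have h2' : n * S n (m + 2) ≤ n * S n (m + 1) := Nat.mul_le_mul_left n s2.le
      omega

lemma good_of_no_tie {n : ℕ} (hn : 3 ≤ n) (h : ¬ Tie n) :
    n ∈ {n : ℕ | 3 ≤ n ∧
      ∃! k0 : ℕ, k0 ≤ n ∧ ∀ k : ℕ, k ≤ n → stirling1 n k ≤ stirling1 n k0} := by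
  refine ⟨hn, ?_⟩
  have hiff : ∀ k0 : ℕ,
      (k0 ≤ n ∧ ∀ k : ℕ, k ≤ n → stirling1 n k ≤ stirling1 n k0) ↔ Md n k0 := by
    intro k0
    unfold Md
    simp only [stirling1_eq_S]
  obtain ⟨k, hk, huniq⟩ := unique_of_no_tie (by omega) h
  exact ⟨k, (hiff k).2 hk, fun y hy => huniq y ((hiff y).1 hy)⟩


end StirlingProof

/-- There are infinitely many `n ≥ 3` for which the unsigned Stirling numbers of the first
kind `{c(n,k)}_{k=0}^n` have exactly one mode. -/

theorem stirling_one_mode_infinitely_often :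
    {n : ℕ | 3 ≤ n ∧
      ∃! k0 : ℕ, k0 ≤ n ∧ ∀ k : ℕ, k ≤ n → stirling1 n k ≤ stirling1 n k0}.Infinite := by
  apply Set.infinite_of_forall_exists_gt
  intro a
  set n := max (a + 1) 3 with hndef
  have hn3 : 3 ≤ n := le_max_right _ _
  have hna : a < n := lt_of_lt_of_le (by omega) (le_max_left _ _)
  by_cases h : Tie n
  · have h2 := tie_succ (by omega) h
    exact ⟨n + 1, good_of_no_tie (by omega) h2, by omega⟩
  · exact ⟨n, good_of_no_tie hn3 h, by omega⟩
end
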